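/- If ψ is a conditionally negative length on a discrete group G, then for each t > 0 the function g ↦ e^{−tψ(g)} is positive definite on G (Schoenberg's theorem): for all finitely supported a : G → ℂ, ∑_{g,h} conj(a_g) a_h e^{−tψ(g⁻¹h)} ≥ 0. -/

import Mathlib

open ComplexOrder

/-- A conditionally negative length function on a discrete group `G`. -/
def IsCondNegLength {G : Type*} [Group G] (ψ : G → ℝ) : Prop :=
  ψ 1 = 0 ∧ (∀ g : G, ψ g = ψ g⁻¹) ∧
    ∀ (s : Finset G) (a : G → ℂ), (∑ g ∈ s, a g) = 0 →
      (∑ g ∈ s, ∑ h ∈ s, (starRingEnd ℂ) (a g) * a h * (ψ (g⁻¹ * h) : ℂ)) ≤ 0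

noncomputable section
namespace SchoenbergAux
open Matrix Finset
variable {ι : Type*} [Fintype ι]

lemma dot_eq (A : Matrix ι ι ℂ) (x : ι → ℂ) :
    star x ⬝ᵥ A *ᵥ x = ∑ g, ∑ h, star (x g) * (A g h * x h) := by
  simp only [dotProduct, mulVec, Pi.star_apply, Finset.mul_sum]

lemma ones_posSemidef : (Matrix.of fun _ _ : ι => (1 : ℂ)).PosSemidef := by
  refine Matrix.posSemidef_iff_dotProduct_mulVec.mpr ⟨?_, fun x => ?_⟩
  · ext g h; simp
  · rw [dot_eq]
    have : ∑ g, ∑ h, star (x g) * ((Matrix.of fun _ _ : ι => (1:ℂ)) g h * x h)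
        = star (∑ g, x g) * ∑ g, x g := by
      rw [star_sum, Finset.sum_mul]
      refine Finset.sum_congr rfl fun g _ => ?_
      rw [Finset.mul_sum]
      exact Finset.sum_congr rfl fun h _ => by simp
    rw [this]
    exact star_mul_self_nonneg _

lemma hadamard_posSemidef [DecidableEq ι] {M N : Matrix ι ι ℂ}
    (hM : M.PosSemidef) (hN : N.PosSemidef) :
    (Matrix.of fun g h => M g h * N g h).PosSemidef := by
  open scoped MatrixOrder in obtain ⟨B, hB⟩ := CStarAlgebra.nonneg_iff_eq_star_mul_self.mp hM.nonneg
  have hMgh : ∀ g h, M g h = ∑ k, star (B k g) * B k h := by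
    intro g h
    rw [hB, Matrix.mul_apply]
    simp [Matrix.conjTranspose_apply]
  refine Matrix.posSemidef_iff_dotProduct_mulVec.mpr ⟨?_, fun x => ?_⟩
  · ext g h
    have hm1 : star (M h g) = M g h := congrFun (congrFun hM.1 g) h
    have hm2 : star (N h g) = N g h := congrFun (congrFun hN.1 g) h
    simp only [conjTranspose_apply, of_apply, star_mul']
    rw [hm1, hm2]
  · rw [dot_eq]
    have key : ∑ g, ∑ h, star (x g) * ((Matrix.of fun g h => M g h * N g h) g h * x h)
        = ∑ k, star (fun g => B k g * x g) ⬝ᵥ N *ᵥ (fun g => B k g * x g) := by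
      calc ∑ g, ∑ h, star (x g) * ((Matrix.of fun g h => M g h * N g h) g h * x h)
          = ∑ g, ∑ h, ∑ k, star (B k g * x g) * (N g h * (B k h * x h)) := by
            refine Finset.sum_congr rfl fun g _ => Finset.sum_congr rfl fun h _ => ?_
            rw [Matrix.of_apply, hMgh, Finset.sum_mul, Finset.sum_mul, Finset.mul_sum]
            refine Finset.sum_congr rfl fun k _ => ?_
            simp only [star_mul']
            ring
        _ = ∑ g, ∑ k, ∑ h, star (B k g * x g) * (N g h * (B k h * x h)) :=
            Finset.sum_congr rfl fun g _ => Finset.sum_comm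
        _ = ∑ k, ∑ g, ∑ h, star (B k g * x g) * (N g h * (B k h * x h)) := Finset.sum_comm
        _ = ∑ k, star (fun g => B k g * x g) ⬝ᵥ N *ᵥ (fun g => B k g * x g) := by
            refine Finset.sum_congr rfl fun k _ => ?_
            rw [dot_eq]
    rw [key]
    exact Finset.sum_nonneg fun k _ => hN.dotProduct_mulVec_nonneg _

lemma hasSum_nonneg_complex {f : ℕ → ℂ} {S : ℂ} (h : HasSum f S) (hf : ∀ n, 0 ≤ f n) :
    0 ≤ S := by
  have hre := Complex.hasSum_re h
  have him := Complex.hasSum_im h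
  rw [Complex.le_def]
  constructor
  · have h0 : HasSum (fun _ : ℕ => (0:ℝ)) 0 := hasSum_zero
    simpa using hasSum_le (fun n => by simpa using (Complex.le_def.mp (hf n)).1) h0 hre
  · have him0 : HasSum (fun n : ℕ => (0:ℝ)) S.im := by
      refine HasSum.congr_fun him fun n => ?_
      simpa using (Complex.le_def.mp (hf n)).2
    simpa using (him0.unique hasSum_zero).symm


end SchoenbergAux

namespace SchoenbergAux3
open Matrix Finset SchoenbergAux
variable {ι : Type*} [Fintype ι]

lemma pow_form_nonneg [DecidableEq ι] {A : Matrix ι ι ℂ} (hA : A.PosSemidef) (n : ℕ) :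
    (Matrix.of fun g h => A g h ^ n).PosSemidef := by
  induction n with
  | zero => simpa [pow_zero] using ones_posSemidef (ι := ι)
  | succ n ih =>
      have heq : (Matrix.of fun g h => A g h ^ (n+1))
          = Matrix.of fun g h => (Matrix.of fun g h => A g h ^ n) g h * A g h := by
        ext g h; simp [pow_succ]
      rw [heq]; exact hadamard_posSemidef ih hA

lemma exp_form_nonneg [DecidableEq ι] {A : Matrix ι ι ℂ} (hA : A.PosSemidef) (x : ι → ℂ) :
    0 ≤ ∑ g, ∑ h, star (x g) * x h * Complex.exp (A g h) := by
  have hexp : ∀ z : ℂ, HasSum (fun n : ℕ => z ^ n / (Nat.factorial n)) (Complex.exp z) := by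
    intro z
    have h1 : HasSum (fun n : ℕ => z ^ n / (Nat.factorial n)) (∑' n : ℕ, z ^ n / (Nat.factorial n)) :=
      (NormedSpace.expSeries_div_summable z).hasSum
    have h2 : Complex.exp z = ∑' n : ℕ, z ^ n / (Nat.factorial n) := by
      rw [Complex.exp_eq_exp_ℂ]; exact congrFun NormedSpace.exp_eq_tsum_div z
    exact h2 ▸ h1
  have htot : HasSum (fun n : ℕ => ∑ g, ∑ h, star (x g) * x h * (A g h ^ n / (Nat.factorial n)))
      (∑ g, ∑ h, star (x g) * x h * Complex.exp (A g h)) :=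
    hasSum_sum fun g _ => hasSum_sum fun h _ => (hexp (A g h)).mul_left _
  refine hasSum_nonneg_complex htot fun n => ?_
  have h1 : 0 ≤ ∑ g, ∑ h, star (x g) * x h * A g h ^ n := by
    have hp := (pow_form_nonneg hA n).dotProduct_mulVec_nonneg x
    rw [dot_eq] at hp
    refine le_of_le_of_eq hp ?_
    refine Finset.sum_congr rfl fun g _ => Finset.sum_congr rfl fun h _ => ?_
    rw [Matrix.of_apply]; ring
  have h2 : (0:ℂ) ≤ (((Nat.factorial n : ℝ) : ℂ))⁻¹ := by
    rw [← Complex.ofReal_inv, Complex.zero_le_real]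
    positivity
  have h3 : ∑ g, ∑ h, star (x g) * x h * (A g h ^ n / (Nat.factorial n))
      = (∑ g, ∑ h, star (x g) * x h * A g h ^ n) * (((Nat.factorial n) : ℝ)⁻¹ : ℂ) := by
    rw [Finset.sum_mul]
    refine Finset.sum_congr rfl fun g _ => ?_
    rw [Finset.sum_mul]
    refine Finset.sum_congr rfl fun h _ => ?_
    rw [div_eq_mul_inv]
    push_cast
    ring
  rw [h3]; exact mul_nonneg h1 h2


end SchoenbergAux3

namespace SchoenbergAux4
open Finset

lemma qf_nonneg {G : Type*} [Group G] (ψ : G → ℝ) (hψ : IsCondNegLength ψ)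
    (s : Finset G) (a : G → ℂ) :
    0 ≤ ∑ g ∈ s, ∑ h ∈ s,
      (starRingEnd ℂ) (a g) * a h * ((ψ g + ψ h - ψ (g⁻¹ * h) : ℝ) : ℂ) := by
  classical
  obtain ⟨h1, hsymm, hneg⟩ := hψ
  have hsymm' : ∀ g : G, ψ g⁻¹ = ψ g := fun g => (hsymm g).symm
  set T : ℂ := ∑ g ∈ s, a g with hT
  set b : G → ℂ := fun g => (if g ∈ s then a g else 0) - (if g = 1 then T else 0) with hb
  set s' : Finset G := insert 1 s with hs'
  have h1s' : (1 : G) ∈ s' := Finset.mem_insert_self 1 s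
  have hsub : s ⊆ s' := Finset.subset_insert 1 s
  have collapse : ∀ (f : G → ℂ), (∑ g ∈ s', if g ∈ s then f g else 0) = ∑ g ∈ s, f g := by
    intro f
    rw [Finset.sum_ite_mem, Finset.inter_eq_right.mpr hsub]
  have delta : ∀ (f : G → ℂ), (∑ g ∈ s', if g = 1 then f g else 0) = f 1 := by
    intro f
    rw [Finset.sum_ite_eq' s' 1 f, if_pos h1s']
  have hb0 : (∑ g ∈ s', b g) = 0 := by
    simp only [hb, Finset.sum_sub_distrib]
    rw [collapse, delta, ← hT, sub_self]
  have hD := hneg s' b hb0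
  have expand : ∀ g h : G, (starRingEnd ℂ) (b g) * b h * (ψ (g⁻¹ * h) : ℂ)
      = (if g ∈ s then (if h ∈ s then (starRingEnd ℂ) (a g) * a h * (ψ (g⁻¹ * h) : ℂ) else 0) else 0)
        - (if h = 1 then (if g ∈ s then (starRingEnd ℂ) (a g) * T * (ψ g : ℂ) else 0) else 0)
        - (if g = 1 then (if h ∈ s then (starRingEnd ℂ) T * a h * (ψ h : ℂ) else 0) else 0) := by
    intro g h
    by_cases hg1 : g = 1
    · subst hg1
      by_cases hh1 : h = 1
      · subst hh1
        simp [hb, h1]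
      · simp only [hb, hh1, if_false, ite_false, if_pos rfl, inv_one, one_mul, map_sub,
          sub_zero, h1, Complex.ofReal_zero, mul_zero, zero_mul, zero_sub]
        split_ifs <;> (try simp only [map_zero, hsymm', Complex.ofReal_zero]) <;> ring
    · by_cases hh1 : h = 1
      · subst hh1
        simp only [hb, hg1, if_false, ite_false, if_pos rfl, mul_one, map_sub, sub_zero]
        split_ifs <;> (try simp only [map_zero, hsymm', Complex.ofReal_zero]) <;> ring
      · simp only [hb, hg1, hh1, if_false, ite_false, sub_zero, map_sub]
        split_ifs <;> (try simp only [map_zero, hsymm', Complex.ofReal_zero]) <;> ring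
  have hD_eq : (∑ g ∈ s', ∑ h ∈ s', (starRingEnd ℂ) (b g) * b h * (ψ (g⁻¹ * h) : ℂ))
      = (∑ g ∈ s, ∑ h ∈ s, (starRingEnd ℂ) (a g) * a h * (ψ (g⁻¹ * h) : ℂ))
        - (∑ g ∈ s, (starRingEnd ℂ) (a g) * T * (ψ g : ℂ))
        - (∑ h ∈ s, (starRingEnd ℂ) T * a h * (ψ h : ℂ)) := by
    have e1 : (∑ g ∈ s', ∑ h ∈ s',
          if g ∈ s then (if h ∈ s then (starRingEnd ℂ) (a g) * a h * (ψ (g⁻¹ * h) : ℂ) else 0) else 0)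
        = ∑ g ∈ s, ∑ h ∈ s, (starRingEnd ℂ) (a g) * a h * (ψ (g⁻¹ * h) : ℂ) := by
      rw [← collapse (fun g => ∑ h ∈ s, (starRingEnd ℂ) (a g) * a h * (ψ (g⁻¹ * h) : ℂ))]
      refine Finset.sum_congr rfl fun g _ => ?_
      by_cases hgs : g ∈ s
      · simp only [hgs, if_true]
        exact collapse _
      · simp [hgs]
    have e2 : (∑ g ∈ s', ∑ h ∈ s',
          if h = 1 then (if g ∈ s then (starRingEnd ℂ) (a g) * T * (ψ g : ℂ) else 0) else 0)
        = ∑ g ∈ s, (starRingEnd ℂ) (a g) * T * (ψ g : ℂ) := by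
      calc (∑ g ∈ s', ∑ h ∈ s',
              if h = 1 then (if g ∈ s then (starRingEnd ℂ) (a g) * T * (ψ g : ℂ) else 0) else 0)
          = ∑ g ∈ s', (if g ∈ s then (starRingEnd ℂ) (a g) * T * (ψ g : ℂ) else 0) :=
            Finset.sum_congr rfl fun g _ =>
              delta (fun _ => if g ∈ s then (starRingEnd ℂ) (a g) * T * (ψ g : ℂ) else 0)
        _ = ∑ g ∈ s, (starRingEnd ℂ) (a g) * T * (ψ g : ℂ) := collapse _
    have e3 : (∑ g ∈ s', ∑ h ∈ s',
          if g = 1 then (if h ∈ s then (starRingEnd ℂ) T * a h * (ψ h : ℂ) else 0) else 0)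
        = ∑ h ∈ s, (starRingEnd ℂ) T * a h * (ψ h : ℂ) := by
      calc (∑ g ∈ s', ∑ h ∈ s',
              if g = 1 then (if h ∈ s then (starRingEnd ℂ) T * a h * (ψ h : ℂ) else 0) else 0)
          = ∑ g ∈ s', (if g = 1 then
              ∑ h ∈ s', (if h ∈ s then (starRingEnd ℂ) T * a h * (ψ h : ℂ) else 0) else 0) :=
            Finset.sum_congr rfl fun g _ => by by_cases hg : g = 1 <;> simp [hg]
        _ = ∑ h ∈ s', (if h ∈ s then (starRingEnd ℂ) T * a h * (ψ h : ℂ) else 0) := delta _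
        _ = ∑ h ∈ s, (starRingEnd ℂ) T * a h * (ψ h : ℂ) := collapse _
    calc (∑ g ∈ s', ∑ h ∈ s', (starRingEnd ℂ) (b g) * b h * (ψ (g⁻¹ * h) : ℂ))
        = ∑ g ∈ s', ∑ h ∈ s',
            ((if g ∈ s then (if h ∈ s then (starRingEnd ℂ) (a g) * a h * (ψ (g⁻¹ * h) : ℂ) else 0) else 0)
            - (if h = 1 then (if g ∈ s then (starRingEnd ℂ) (a g) * T * (ψ g : ℂ) else 0) else 0)
            - (if g = 1 then (if h ∈ s then (starRingEnd ℂ) T * a h * (ψ h : ℂ) else 0) else 0)) :=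
          Finset.sum_congr rfl fun g _ => Finset.sum_congr rfl fun h _ => expand g h
      _ = _ := by
          simp only [Finset.sum_sub_distrib]
          rw [e1, e2, e3]
  have hQ_eq : (∑ g ∈ s, ∑ h ∈ s,
        (starRingEnd ℂ) (a g) * a h * ((ψ g + ψ h - ψ (g⁻¹ * h) : ℝ) : ℂ))
      = (∑ g ∈ s, (starRingEnd ℂ) (a g) * T * (ψ g : ℂ))
        + (∑ h ∈ s, (starRingEnd ℂ) T * a h * (ψ h : ℂ))
        - (∑ g ∈ s, ∑ h ∈ s, (starRingEnd ℂ) (a g) * a h * (ψ (g⁻¹ * h) : ℂ)) := by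
    have f1 : ∀ g : G, (∑ h ∈ s, (starRingEnd ℂ) (a g) * a h * (ψ g : ℂ))
        = (starRingEnd ℂ) (a g) * T * (ψ g : ℂ) := by
      intro g
      conv_rhs => rw [hT, Finset.mul_sum, Finset.sum_mul]
    have f2 : (∑ g ∈ s, ∑ h ∈ s, (starRingEnd ℂ) (a g) * a h * (ψ h : ℂ))
        = ∑ h ∈ s, (starRingEnd ℂ) T * a h * (ψ h : ℂ) := by
      rw [Finset.sum_comm]
      refine Finset.sum_congr rfl fun h _ => ?_
      conv_rhs => rw [hT, map_sum, Finset.sum_mul, Finset.sum_mul]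
    calc (∑ g ∈ s, ∑ h ∈ s,
          (starRingEnd ℂ) (a g) * a h * ((ψ g + ψ h - ψ (g⁻¹ * h) : ℝ) : ℂ))
        = ∑ g ∈ s, ∑ h ∈ s,
            ((starRingEnd ℂ) (a g) * a h * (ψ g : ℂ)
            + (starRingEnd ℂ) (a g) * a h * (ψ h : ℂ)
            - (starRingEnd ℂ) (a g) * a h * (ψ (g⁻¹ * h) : ℂ)) := by
          refine Finset.sum_congr rfl fun g _ => Finset.sum_congr rfl fun h _ => ?_
          push_cast
          ring
      _ = (∑ g ∈ s, ∑ h ∈ s, (starRingEnd ℂ) (a g) * a h * (ψ g : ℂ))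
          + (∑ g ∈ s, ∑ h ∈ s, (starRingEnd ℂ) (a g) * a h * (ψ h : ℂ))
          - (∑ g ∈ s, ∑ h ∈ s, (starRingEnd ℂ) (a g) * a h * (ψ (g⁻¹ * h) : ℂ)) := by
          simp only [Finset.sum_add_distrib, Finset.sum_sub_distrib]
      _ = _ := by
          rw [f2, Finset.sum_congr rfl fun g _ => f1 g]
  rw [hQ_eq]
  rw [hD_eq] at hD
  rw [show (∑ g ∈ s, (starRingEnd ℂ) (a g) * T * (ψ g : ℂ))
        + (∑ h ∈ s, (starRingEnd ℂ) T * a h * (ψ h : ℂ))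
        - (∑ g ∈ s, ∑ h ∈ s, (starRingEnd ℂ) (a g) * a h * (ψ (g⁻¹ * h) : ℂ))
      = -((∑ g ∈ s, ∑ h ∈ s, (starRingEnd ℂ) (a g) * a h * (ψ (g⁻¹ * h) : ℂ))
        - (∑ g ∈ s, (starRingEnd ℂ) (a g) * T * (ψ g : ℂ))
        - (∑ h ∈ s, (starRingEnd ℂ) T * a h * (ψ h : ℂ))) by ring]
  exact neg_nonneg.mpr hD


end SchoenbergAux4
end

set_option maxHeartbeats 1000000 in
/-- Schoenberg's theorem:  is positive definite when  is a
conditionally negative length. -/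
theorem schoenberg_pos_def {G : Type*} [Group G] (ψ : G → ℝ)
    (hnonneg : ∀ g, 0 ≤ ψ g) (hψ : IsCondNegLength ψ) :
    ∀ t : ℝ, 0 < t → ∀ (s : Finset G) (a : G → ℂ),
      0 ≤ ∑ g ∈ s, ∑ h ∈ s,
        (starRingEnd ℂ) (a g) * a h * (Real.exp (-t * ψ (g⁻¹ * h)) : ℂ) := by
  intro t ht s a
  classical
  obtain ⟨-, hsymm, -⟩ := id hψ
  set M : Matrix ↥s ↥s ℂ :=
    Matrix.of (fun g h : ↥s =>
      ((t * (ψ (g : G) + ψ (h : G) - ψ ((g : G)⁻¹ * (h : G))) : ℝ) : ℂ)) with hMdef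
  have conv1 : ∀ (K : G → G → ℂ),
      (∑ g : ↥s, ∑ h : ↥s, K (g : G) (h : G)) = ∑ g ∈ s, ∑ h ∈ s, K g h := by
    intro K
    rw [← Finset.sum_coe_sort s (fun g => ∑ h ∈ s, K g h)]
    exact Finset.sum_congr rfl fun g _ => Finset.sum_coe_sort s (K (g : G))
  have hM : M.PosSemidef := by
    refine Matrix.posSemidef_iff_dotProduct_mulVec.mpr ⟨?_, ?_⟩
    · ext g h
      simp only [Matrix.conjTranspose_apply, hMdef, Matrix.of_apply]
      rw [Complex.star_def, Complex.conj_ofReal]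
      have e : ψ ((h : G)⁻¹ * (g : G)) = ψ ((g : G)⁻¹ * (h : G)) := by
        rw [hsymm ((h : G)⁻¹ * (g : G)), mul_inv_rev, inv_inv]
      rw [e]
      congr 1
      ring
    · intro x
      rw [SchoenbergAux.dot_eq]
      set a' : G → ℂ := fun g => if hg : g ∈ s then x ⟨g, hg⟩ else 0 with ha'
      have hxa : ∀ g : ↥s, a' (g : G) = x g := by
        intro g
        simp only [ha', dif_pos g.2]
      have hK := conv1 (fun g' h' => (t : ℂ) * ((starRingEnd ℂ) (a' g') * a' h'
          * ((ψ g' + ψ h' - ψ (g'⁻¹ * h') : ℝ) : ℂ)))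
      have key : (∑ g : ↥s, ∑ h : ↥s, star (x g) * (M g h * x h))
          = (t : ℂ) * ∑ g ∈ s, ∑ h ∈ s, (starRingEnd ℂ) (a' g) * a' h
              * ((ψ g + ψ h - ψ (g⁻¹ * h) : ℝ) : ℂ) := by
        simp only [Finset.mul_sum]
        rw [← hK]
        refine Finset.sum_congr rfl fun g _ => ?_
        refine Finset.sum_congr rfl fun h _ => ?_
        simp only [hMdef, Matrix.of_apply, hxa, starRingEnd_apply]
        push_cast
        ring
      rw [key]
      exact mul_nonneg (Complex.zero_le_real.mpr ht.le)
        (SchoenbergAux4.qf_nonneg ψ hψ s a')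
  set x : ↥s → ℂ := fun g => a (g : G) * ((Real.exp (-t * ψ (g : G)) : ℝ) : ℂ) with hxdef
  have hx := SchoenbergAux3.exp_form_nonneg hM x
  rw [← conv1 (fun g h => (starRingEnd ℂ) (a g) * a h
      * ((Real.exp (-t * ψ (g⁻¹ * h)) : ℝ) : ℂ))]
  refine le_of_le_of_eq hx ?_
  refine Finset.sum_congr rfl fun g _ => Finset.sum_congr rfl fun h _ => ?_
  have hexp3 : Real.exp (-t * ψ (g : G)) * Real.exp (-t * ψ (h : G))
      * Real.exp (t * (ψ (g : G) + ψ (h : G) - ψ ((g : G)⁻¹ * (h : G))))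
      = Real.exp (-t * ψ ((g : G)⁻¹ * (h : G))) := by
    rw [← Real.exp_add, ← Real.exp_add]
    congr 1
    ring
  have hMexp : Complex.exp (M g h)
      = ((Real.exp (t * (ψ (g : G) + ψ (h : G) - ψ ((g : G)⁻¹ * (h : G)))) : ℝ) : ℂ) := by
    rw [hMdef]
    simp only [Matrix.of_apply]
    rw [Complex.ofReal_exp]
  rw [hMexp, ← hexp3, hxdef]
  simp only [star_mul', Complex.star_def, Complex.conj_ofReal]
  push_cast
  ring
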